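/- Let H be a connected finite simple graph with two vertices s and t at distance d ≥ 2 such that every vertex of H lies in some layer L_0, L_1, …, L_d. Let (G, L) be the constructed list-coloring instance, let P_0 and P_r be S-paths in H, and let f_0 and f_r be proper L-colorings of G such that, for each 1 ≤ i ≤ d−1, f_0(u_i) is the unique vertex of P_0 in layer L_i and f_r(u_i) is the unique vertex of P_r in layer L_i. Then there exists a sequence of S-paths P_0 = Q_0, Q_1, …, Q_ℓ = P_r in which consecutive S-paths are adjacent if and only if f_0 and f_r are reconfigurable in (G, L). -/

import Mathlib

/-- The layer `L_i`: vertices at distance `i` from `s` and `d - i` from `t`. -/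
def layerSet {V : Type*} (H : SimpleGraph V) (s t : V) (d i : ℕ) : Set V :=
  {v | H.dist s v = i ∧ H.dist t v = d - i}

/-- The vertices of the constructed graph `G`: a layer vertex `u_i` for each
`1 ≤ i ≤ d - 1`, and a forbidden vertex `w_{a,b}` for each `1 ≤ i ≤ d - 2` and each pair
`a ∈ L_i`, `b ∈ L_{i+1}` with `ab ∉ E(H)`. -/
abbrev CVert {V : Type*} (H : SimpleGraph V) (s t : V) (d : ℕ) :=
  {i : ℕ // 1 ≤ i ∧ i ≤ d - 1} ⊕
    {x : ℕ × V × V // 1 ≤ x.1 ∧ x.1 ≤ d - 2 ∧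
      x.2.1 ∈ layerSet H s t d x.1 ∧ x.2.2 ∈ layerSet H s t d (x.1 + 1) ∧
      ¬ H.Adj x.2.1 x.2.2}

/-- Adjacency of the constructed graph: the forbidden vertex `w_{a,b}` for layers
`i, i+1` is joined exactly to the layer vertices `u_i` and `u_{i+1}`. -/
def CAdj {V : Type*} (H : SimpleGraph V) (s t : V) (d : ℕ) :
    CVert H s t d → CVert H s t d → Prop
  | Sum.inl u, Sum.inr w => u.1 = w.1.1 ∨ u.1 = w.1.1 + 1
  | Sum.inr w, Sum.inl u => u.1 = w.1.1 ∨ u.1 = w.1.1 + 1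
  | _, _ => False

/-- The constructed graph `G`. -/
def CGraph {V : Type*} (H : SimpleGraph V) (s t : V) (d : ℕ) :
    SimpleGraph (CVert H s t d) where
  Adj := CAdj H s t d
  symm := by constructor; rintro (u | w) (u' | w') h <;> simp [CAdj] at h ⊢ <;> exact h
  loopless := by constructor; rintro (u | w) h <;> simp [CAdj] at h

/-- The list assignment of the constructed instance: the layer vertex `u_i` has list
`L_i`, and the forbidden vertex `w_{a,b}` has list `{a, b}` (colors are vertices of
`H`). -/
def CList {V : Type*} (H : SimpleGraph V) (s t : V) (d : ℕ) :
    CVert H s t d → Set V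
  | Sum.inl u => layerSet H s t d u.1
  | Sum.inr w => {w.1.2.1, w.1.2.2}

/-- A proper `L`-coloring of `G`: each vertex gets a color from its list, and adjacent
vertices get different colors. -/
def IsProperListColoring {W β : Type*} (G : SimpleGraph W) (L : W → Set β)
    (f : W → β) : Prop :=
  (∀ v, f v ∈ L v) ∧ ∀ ⦃u w⦄, G.Adj u w → f u ≠ f w

/-- One recoloring step between proper list colorings: both are proper and they differ
on exactly one vertex. -/
def RecolorStep {W β : Type*} (G : SimpleGraph W) (L : W → Set β)
    (f g : W → β) : Prop :=
  IsProperListColoring G L f ∧ IsProperListColoring G L g ∧ ∃! w, f w ≠ g w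

/-- `f` and `g` are reconfigurable in `(G, L)` if there is a recoloring sequence
(a sequence of proper list colorings, consecutive ones differing on one vertex)
from `f` to `g`. -/
def Reconfigurable {W β : Type*} (G : SimpleGraph W) (L : W → Set β)
    (f g : W → β) : Prop :=
  Relation.ReflTransGen (RecolorStep G L) f g

/-- An S-path: a shortest path between `s` and `t`, i.e. a path with exactly
`dist s t` edges. -/
def IsSPath {V : Type*} (H : SimpleGraph V) {s t : V} (p : H.Walk s t) : Prop :=
  p.IsPath ∧ p.length = H.dist s t

/-- Two S-paths are adjacent: each contains exactly one vertex not on the other. -/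
def SPathAdjacent {V : Type*} [DecidableEq V] {H : SimpleGraph V} {s t : V}
    (p q : H.Walk s t) : Prop :=
  (p.support.toFinset \ q.support.toFinset).card = 1 ∧
    (q.support.toFinset \ p.support.toFinset).card = 1

namespace SPathAux
open SimpleGraph

open SimpleGraph

variable {V : Type*}

def chainWalk (H : SimpleGraph V) (c : ℕ → V) :
    (n : ℕ) → (k : ℕ) → (∀ i, i < n → H.Adj (c (k + i)) (c (k + i + 1))) →
      H.Walk (c k) (c (k + n))
  | 0, _, _ => SimpleGraph.Walk.nil
  | n + 1, k, h =>
      SimpleGraph.Walk.cons (h 0 n.succ_pos)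
        ((chainWalk H c n (k + 1) (fun i hi => by
            have := h (i + 1) (by omega)
            rw [show k + 1 + i = k + (i + 1) by omega]
            exact this)).copy rfl (by rw [show k + 1 + n = k + (n + 1) by omega]))

lemma chainWalk_length (H : SimpleGraph V) (c : ℕ → V) :
    ∀ n k h, (chainWalk H c n k h).length = n
  | 0, _, _ => rfl
  | n + 1, k, h => by
      simp [chainWalk, chainWalk_length H c n]

lemma chainWalk_getVert (H : SimpleGraph V) (c : ℕ → V) :
    ∀ n k h j, j ≤ n → (chainWalk H c n k h).getVert j = c (k + j)
  | 0, k, h, j, hj => by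
      obtain rfl : j = 0 := by omega
      simp [chainWalk]
  | n + 1, k, h, 0, hj => by simp [chainWalk]
  | n + 1, k, h, j + 1, hj => by
      simp only [chainWalk, Walk.getVert_cons_succ, Walk.getVert_copy]
      rw [chainWalk_getVert H c n (k + 1) _ j (by omega)]
      congr 1
      omega

lemma walk_ext {H : SimpleGraph V} {x y : V} (p q : H.Walk x y)
    (hl : p.length = q.length) (hg : ∀ i, p.getVert i = q.getVert i) : p = q := by
  induction p with
  | nil =>
    cases q with
    | nil => rfl
    | cons h q => simp at hl
  | cons h p ih =>
    cases q with
    | nil => simp at hl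
    | cons h' q =>
      have h1 : p.getVert 0 = q.getVert 0 := hg 1
      simp only [Walk.getVert_zero] at h1
      subst h1
      rw [ih q (by simpa using hl) (fun i => hg (i + 1))]


end SPathAux

section Aux2
open SimpleGraph
namespace SPathAux

variable {V : Type*} {H : SimpleGraph V} {s t : V} {d : ℕ}

lemma mem_layerSet {v : V} {i : ℕ} :
    v ∈ layerSet H s t d i ↔ H.dist s v = i ∧ H.dist t v = d - i := Iff.rfl

lemma layer_eq {v : V} {i j : ℕ} (hi : v ∈ layerSet H s t d i)
    (hj : v ∈ layerSet H s t d j) : i = j := hi.1.symm.trans hj.1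

lemma ne_of_layers {x y : V} {i j : ℕ} (hx : x ∈ layerSet H s t d i)
    (hy : y ∈ layerSet H s t d j) (hij : i ≠ j) : x ≠ y := by
  rintro rfl; exact hij (layer_eq hx hy)

/-- Every vertex of an S-path lies in the appropriate layer. -/
lemma sPath_getVert_mem_layer (hconn : H.Connected) (hd : H.dist s t = d)
    {p : H.Walk s t} (hp : IsSPath H p) {i : ℕ} (hi : i ≤ d) :
    p.getVert i ∈ layerSet H s t d i := by
  have hlen : p.length = d := hp.2.trans hd
  have h1 : ∀ j : ℕ, H.dist s (p.getVert j) ≤ j := by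
    intro j
    induction j with
    | zero => simp
    | succ j ih =>
      by_cases hj : j < p.length
      · have hadj := p.adj_getVert_succ hj
        calc H.dist s (p.getVert (j + 1)) ≤
            H.dist s (p.getVert j) + H.dist (p.getVert j) (p.getVert (j + 1)) :=
              hconn.dist_triangle
          _ ≤ j + 1 := by
              have : H.dist (p.getVert j) (p.getVert (j + 1)) = 1 :=
                (H.dist_eq_one_iff_adj).2 hadj
              omega
      · rw [p.getVert_of_length_le (show p.length ≤ j + 1 by omega), hd]
        omega
  have h2 : ∀ m j : ℕ, j + m = d → H.dist (p.getVert j) t ≤ m := by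
    intro m
    induction m with
    | zero =>
      intro j hj
      rw [show j = p.length by omega, p.getVert_length]
      simp
    | succ m ih =>
      intro j hj
      have hadj := p.adj_getVert_succ (by omega : j < p.length)
      calc H.dist (p.getVert j) t ≤
          H.dist (p.getVert j) (p.getVert (j + 1)) + H.dist (p.getVert (j + 1)) t :=
            hconn.dist_triangle
        _ ≤ m + 1 := by
            have h3 : H.dist (p.getVert j) (p.getVert (j + 1)) = 1 :=
              (H.dist_eq_one_iff_adj).2 hadj
            have := ih (j + 1) (by omega)
            omega
  have hA := h1 i
  have hB := h2 (d - i) i (by omega)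
  have hT : (d : ℕ) ≤ H.dist s (p.getVert i) + H.dist (p.getVert i) t := by
    rw [← hd]; exact hconn.dist_triangle
  constructor
  · omega
  · rw [SimpleGraph.dist_comm]; omega

/-- The unique vertex of an S-path in a given layer. -/
lemma sPath_support_unique (hconn : H.Connected) (hd : H.dist s t = d)
    {p : H.Walk s t} (hp : IsSPath H p) {v : V} {i : ℕ} (hi : i ≤ d)
    (hv : v ∈ p.support) (hvi : v ∈ layerSet H s t d i) : v = p.getVert i := by
  obtain ⟨j, hjv, hjl⟩ := Walk.mem_support_iff_exists_getVert.1 hv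
  have hlen : p.length = d := hp.2.trans hd
  have hj : p.getVert j ∈ layerSet H s t d j := sPath_getVert_mem_layer hconn hd hp (by omega)
  rw [← hjv] at hvi ⊢
  rw [layer_eq hvi hj]

end SPathAux
end Aux2

section Aux3
open SimpleGraph
namespace SPathAux

variable {V : Type*} (H : SimpleGraph V) (s t : V) (d : ℕ)

/-- The "column" function of a coloring: position `i` on the would-be path. -/
def col (f : CVert H s t d → V) (i : ℕ) : V :=
  if h : 1 ≤ i ∧ i ≤ d - 1 then f (Sum.inl ⟨i, h⟩) else if i = 0 then s else t

variable {H s t d}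

lemma col_zero (f : CVert H s t d → V) : col H s t d f 0 = s := by simp [col]

lemma col_eq (f : CVert H s t d → V) {i : ℕ} (h : 1 ≤ i ∧ i ≤ d - 1) :
    col H s t d f i = f (Sum.inl ⟨i, h⟩) := dif_pos h

lemma col_inl (f : CVert H s t d → V) (u : {i : ℕ // 1 ≤ i ∧ i ≤ d - 1}) :
    col H s t d f u.1 = f (Sum.inl u) := col_eq f u.2

lemma col_last (hd2 : 2 ≤ d) (f : CVert H s t d → V) : col H s t d f d = t := by
  rw [col, dif_neg (by omega), if_neg (by omega)]

lemma cAdj_iff {x y : CVert H s t d} :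
    (CGraph H s t d).Adj x y ↔ CAdj H s t d x y := Iff.rfl

lemma adj_inl_inr {u : {i : ℕ // 1 ≤ i ∧ i ≤ d - 1}}
    {w : {x : ℕ × V × V // 1 ≤ x.1 ∧ x.1 ≤ d - 2 ∧
      x.2.1 ∈ layerSet H s t d x.1 ∧ x.2.2 ∈ layerSet H s t d (x.1 + 1) ∧
      ¬ H.Adj x.2.1 x.2.2}} (h : u.1 = w.1.1 ∨ u.1 = w.1.1 + 1) :
    (CGraph H s t d).Adj (Sum.inl u) (Sum.inr w) := h

lemma col_mem (hd : H.dist s t = d) {f : CVert H s t d → V}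
    (hf1 : ∀ v, f v ∈ CList H s t d v) {i : ℕ} (hi : i ≤ d) :
    col H s t d f i ∈ layerSet H s t d i := by
  by_cases h : 1 ≤ i ∧ i ≤ d - 1
  · rw [col_eq f h]; exact hf1 (Sum.inl ⟨i, h⟩)
  · rcases Nat.eq_zero_or_pos i with h0 | h0
    · subst h0
      rw [col_zero]
      exact ⟨by simp, by rw [SimpleGraph.dist_comm]; simpa using hd⟩
    · have hid : i = d := by omega
      subst hid
      rw [col, dif_neg h, if_neg (by omega)]
      exact ⟨hd, by simp⟩

lemma col_adj (hconn : H.Connected) (hd : H.dist s t = d) (hd2 : 2 ≤ d)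
    {f : CVert H s t d → V}
    (hf : IsProperListColoring (CGraph H s t d) (CList H s t d) f)
    {i : ℕ} (hi : i < d) : H.Adj (col H s t d f i) (col H s t d f (i + 1)) := by
  have ha : col H s t d f i ∈ layerSet H s t d i := col_mem hd hf.1 (by omega)
  have hb : col H s t d f (i + 1) ∈ layerSet H s t d (i + 1) := col_mem hd hf.1 (by omega)
  rcases Nat.eq_zero_or_pos i with h0 | h0
  · subst h0
    rw [col_zero]
    exact (H.dist_eq_one_iff_adj).1 hb.1
  · by_cases hlast : i = d - 1
    · subst hlast
      rw [show d - 1 + 1 = d by omega, col_last hd2]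
      refine ((H.dist_eq_one_iff_adj).1 ?_).symm
      have := ha.2
      rw [this]; omega
    · -- middle case: use a forbidden vertex
      have hi2 : 1 ≤ i ∧ i ≤ d - 2 := ⟨h0, by omega⟩
      by_contra hnadj
      set a := col H s t d f i with hadef
      set b := col H s t d f (i + 1) with hbdef
      set w : {x : ℕ × V × V // 1 ≤ x.1 ∧ x.1 ≤ d - 2 ∧
          x.2.1 ∈ layerSet H s t d x.1 ∧ x.2.2 ∈ layerSet H s t d (x.1 + 1) ∧
          ¬ H.Adj x.2.1 x.2.2} :=
        ⟨(i, a, b), hi2.1, hi2.2, ha, hb, hnadj⟩ with hw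
      have hu1 : 1 ≤ i ∧ i ≤ d - 1 := ⟨h0, by omega⟩
      have hu2 : 1 ≤ i + 1 ∧ i + 1 ≤ d - 1 := ⟨by omega, by omega⟩
      have e1 := hf.2 (adj_inl_inr (u := ⟨i, hu1⟩) (w := w) (Or.inl rfl))
      have e2 := hf.2 (adj_inl_inr (u := ⟨i + 1, hu2⟩) (w := w) (Or.inr rfl))
      have hfw : f (Sum.inr w) ∈ ({a, b} : Set V) := hf.1 (Sum.inr w)
      rw [← col_eq f hu1, ← hadef] at e1
      rw [← col_eq f hu2, ← hbdef] at e2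
      rcases hfw with h | h
      · exact e1 h.symm
      · exact e2 h.symm

variable (H s t d) in
/-- The S-path associated to a proper coloring. -/
def pathOf (hconn : H.Connected) (hd : H.dist s t = d) (hd2 : 2 ≤ d)
    {f : CVert H s t d → V}
    (hf : IsProperListColoring (CGraph H s t d) (CList H s t d) f) : H.Walk s t :=
  (chainWalk H (col H s t d f) d 0 (fun i hi => by
      have := col_adj hconn hd hd2 hf (i := i) (by omega)
      simpa using this)).copy (col_zero f)
    (by rw [Nat.zero_add]; exact col_last hd2 f)

lemma pathOf_length (hconn : H.Connected) (hd : H.dist s t = d) (hd2 : 2 ≤ d)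
    {f : CVert H s t d → V}
    (hf : IsProperListColoring (CGraph H s t d) (CList H s t d) f) :
    (pathOf H s t d hconn hd hd2 hf).length = d := by
  simp [pathOf, chainWalk_length]

lemma pathOf_getVert (hconn : H.Connected) (hd : H.dist s t = d) (hd2 : 2 ≤ d)
    {f : CVert H s t d → V}
    (hf : IsProperListColoring (CGraph H s t d) (CList H s t d) f)
    {j : ℕ} (hj : j ≤ d) :
    (pathOf H s t d hconn hd hd2 hf).getVert j = col H s t d f j := by
  simp only [pathOf, Walk.getVert_copy]
  rw [chainWalk_getVert H _ d 0 _ j hj, Nat.zero_add]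

lemma pathOf_isSPath (hconn : H.Connected) (hd : H.dist s t = d) (hd2 : 2 ≤ d)
    {f : CVert H s t d → V}
    (hf : IsProperListColoring (CGraph H s t d) (CList H s t d) f) :
    IsSPath H (pathOf H s t d hconn hd hd2 hf) := by
  have hlen : (pathOf H s t d hconn hd hd2 hf).length = H.dist s t := by
    rw [pathOf_length hconn hd hd2 hf, hd]
  exact ⟨Walk.isPath_of_length_eq_dist _ hlen, hlen⟩

end SPathAux
end Aux3

section Aux4
open SimpleGraph
namespace SPathAux

variable {V : Type*} {H : SimpleGraph V} {s t : V} {d : ℕ}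

lemma cVert_finite [Finite V] : Finite (CVert H s t d) := by
  have h1 : Finite {i : ℕ // 1 ≤ i ∧ i ≤ d - 1} := by
    apply Finite.of_injective (fun x => (⟨x.1, by have := x.2; omega⟩ : Fin (d + 1)))
    rintro ⟨i, hi⟩ ⟨j, hj⟩ h
    simpa [Fin.ext_iff] using h
  have h2 : Finite {x : ℕ × V × V // 1 ≤ x.1 ∧ x.1 ≤ d - 2 ∧
      x.2.1 ∈ layerSet H s t d x.1 ∧ x.2.2 ∈ layerSet H s t d (x.1 + 1) ∧
      ¬ H.Adj x.2.1 x.2.2} := by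
    apply Finite.of_injective
      (fun x => ((⟨x.1.1, by have := x.2.1; have := x.2.2.1; omega⟩ : Fin (d + 1)),
        x.1.2) : _ → Fin (d + 1) × V × V)
    rintro ⟨⟨i, a, b⟩, hx⟩ ⟨⟨j, a', b'⟩, hy⟩ h
    simpa [Fin.ext_iff, Prod.ext_iff] using h
  exact Finite.instSum

/-- Any edge of the constructed graph joins a layer vertex and a forbidden vertex. -/
lemma cAdj_cases {x y : CVert H s t d} (h : (CGraph H s t d).Adj x y) :
    (∃ u w, x = Sum.inl u ∧ y = Sum.inr w ∧ (u.1 = w.1.1 ∨ u.1 = w.1.1 + 1)) ∨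
    (∃ u w, x = Sum.inr w ∧ y = Sum.inl u ∧ (u.1 = w.1.1 ∨ u.1 = w.1.1 + 1)) := by
  have h' : CAdj H s t d x y := h
  match x, y, h' with
  | Sum.inl u, Sum.inr w, h' => exact Or.inl ⟨u, w, rfl, rfl, h'⟩
  | Sum.inr w, Sum.inl u, h' => exact Or.inr ⟨u, w, rfl, rfl, h'⟩

/-- Two proper colorings agreeing on all layer vertices are reconfigurable. -/
lemma recolor_inr [Finite V] {f g : CVert H s t d → V}
    (hf : IsProperListColoring (CGraph H s t d) (CList H s t d) f)
    (hg : IsProperListColoring (CGraph H s t d) (CList H s t d) g)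
    (hagree : ∀ u, f (Sum.inl u) = g (Sum.inl u)) :
    Reconfigurable (CGraph H s t d) (CList H s t d) f g := by
  classical
  have : Finite (CVert H s t d) := cVert_finite
  have key : ∀ n (f : CVert H s t d → V),
      IsProperListColoring (CGraph H s t d) (CList H s t d) f →
      (∀ u, f (Sum.inl u) = g (Sum.inl u)) →
      ({w | f w ≠ g w}).toFinite.toFinset.card ≤ n →
      Reconfigurable (CGraph H s t d) (CList H s t d) f g := by
    intro n
    induction n with
    | zero =>
      intro f hf hagree hcard
      have hempty : ({w | f w ≠ g w}).toFinite.toFinset = ∅ := by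
        rw [← Finset.card_eq_zero]; omega
      have : f = g := by
        funext w
        by_contra hw
        have : w ∈ ({w | f w ≠ g w}).toFinite.toFinset := by
          simp [Set.Finite.mem_toFinset, hw]
        rw [hempty] at this
        simp at this
      rw [this]
      exact Relation.ReflTransGen.refl
    | succ n ih =>
      intro f hf hagree hcard
      by_cases hfg : f = g
      · rw [hfg]
        exact Relation.ReflTransGen.refl
      · obtain ⟨w, hw⟩ : ∃ w, f w ≠ g w := by
          by_contra h
          push_neg at h
          exact hfg (funext h)
        set f' := Function.update f w (g w) with hf'
        have hwinr : ∀ u, w ≠ Sum.inl u := by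
          rintro u rfl
          exact hw (hagree u)
        have hf'inl : ∀ u, f' (Sum.inl u) = f (Sum.inl u) := fun u =>
          Function.update_of_ne (fun h => hwinr u h.symm) _ _
        have hproper' : IsProperListColoring (CGraph H s t d) (CList H s t d) f' := by
          constructor
          · intro v
            by_cases hv : v = w
            · subst hv
              simp only [hf', Function.update_self]
              exact hg.1 v
            · simp only [hf', Function.update_of_ne hv]
              exact hf.1 v
          · intro x y hxy
            have hxyne : x ≠ y := (CGraph H s t d).ne_of_adj hxy
            -- helper : for an edge with endpoint w, the other endpoint is inl
            have main : ∀ u : {i : ℕ // 1 ≤ i ∧ i ≤ d - 1}, (CGraph H s t d).Adj w (Sum.inl u) →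
                f' w ≠ f' (Sum.inl u) := by
              intro u hadj
              rw [hf'inl u, hagree u]
              simp only [hf', Function.update_self]
              exact hg.2 hadj
            by_cases hx : x = w
            · subst hx
              rcases cAdj_cases hxy with ⟨u, w', h1, h2, _⟩ | ⟨u, w', h1, h2, _⟩
              · exfalso; exact hwinr u (by rw [h1])
              · rw [h2] at hxy ⊢; exact main u hxy
            · by_cases hy : y = w
              · subst hy
                rcases cAdj_cases hxy with ⟨u, w', h1, h2, _⟩ | ⟨u, w', h1, h2, _⟩
                · rw [h1] at hxy ⊢
                  exact fun he => (main u ((CGraph H s t d).adj_symm hxy)) he.symm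
                · exfalso; exact hwinr u (by rw [h2])
              · simp only [hf', Function.update_of_ne hx, Function.update_of_ne hy]
                exact hf.2 hxy
        have hstep : RecolorStep (CGraph H s t d) (CList H s t d) f f' := by
          refine ⟨hf, hproper', w, ?_, ?_⟩
          · simp only [hf', Function.update_self]
            exact hw
          · intro y hy
            by_contra hyw
            simp only [hf', Function.update_of_ne hyw] at hy
            exact hy rfl
        have hcard' : ({w' | f' w' ≠ g w'}).toFinite.toFinset.card ≤ n := by
          have hsub : ({w' | f' w' ≠ g w'}).toFinite.toFinset ⊆
              (({w' | f w' ≠ g w'}).toFinite.toFinset).erase w := by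
            intro x hx
            rw [Set.Finite.mem_toFinset] at hx
            simp only [Set.mem_setOf_eq] at hx
            by_cases hxw : x = w
            · subst hxw
              simp only [hf', Function.update_self] at hx
              exact absurd rfl hx
            · simp only [hf', Function.update_of_ne hxw] at hx
              exact Finset.mem_erase.2 ⟨hxw, by
                rw [Set.Finite.mem_toFinset]; exact hx⟩
          have hmem : w ∈ ({w' | f w' ≠ g w'}).toFinite.toFinset := by
            rw [Set.Finite.mem_toFinset]; exact hw
          have := Finset.card_le_card hsub
          rw [Finset.card_erase_of_mem hmem] at this
          omega
        have hagree' : ∀ u, f' (Sum.inl u) = g (Sum.inl u) := fun u =>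
          (hf'inl u).trans (hagree u)
        exact Relation.ReflTransGen.head hstep (ih f' hproper' hagree' hcard')
  exact key _ f hf hagree le_rfl

end SPathAux
end Aux4

section Aux5
open SimpleGraph
namespace SPathAux

variable {V : Type*} {H : SimpleGraph V} {s t : V} {d : ℕ}

lemma proper_of (φ : CVert H s t d → V) (h1 : ∀ v, φ v ∈ CList H s t d v)
    (h2 : ∀ (u : {i : ℕ // 1 ≤ i ∧ i ≤ d - 1})
      (w : {x : ℕ × V × V // 1 ≤ x.1 ∧ x.1 ≤ d - 2 ∧
        x.2.1 ∈ layerSet H s t d x.1 ∧ x.2.2 ∈ layerSet H s t d (x.1 + 1) ∧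
        ¬ H.Adj x.2.1 x.2.2}), (u.1 = w.1.1 ∨ u.1 = w.1.1 + 1) →
        φ (Sum.inl u) ≠ φ (Sum.inr w)) :
    IsProperListColoring (CGraph H s t d) (CList H s t d) φ := by
  refine ⟨h1, ?_⟩
  intro x y hxy
  rcases cAdj_cases hxy with ⟨u, w, rfl, rfl, hc⟩ | ⟨u, w, rfl, rfl, hc⟩
  · exact h2 u w hc
  · exact (h2 u w hc).symm

lemma layer_recolor [Finite V] [DecidableEq V]
    (hconn : H.Connected) (hd : H.dist s t = d) (hd2 : 2 ≤ d)
    {f : CVert H s t d → V}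
    (hf : IsProperListColoring (CGraph H s t d) (CList H s t d) f)
    {i : ℕ} (hii : 1 ≤ i ∧ i ≤ d - 1) {a' : V} (ha' : a' ∈ layerSet H s t d i)
    (hadj1 : H.Adj (col H s t d f (i - 1)) a')
    (hadj2 : H.Adj a' (col H s t d f (i + 1))) :
    ∃ g, IsProperListColoring (CGraph H s t d) (CList H s t d) g ∧
      Reconfigurable (CGraph H s t d) (CList H s t d) f g ∧
      col H s t d g i = a' ∧ ∀ j, j ≠ i → col H s t d g j = col H s t d f j := by
  classical
  set g : CVert H s t d → V := Sum.elim
    (fun u => if u.1 = i then a' else f (Sum.inl u))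
    (fun w => if w.1.1 = i ∧ w.1.2.1 = a' then w.1.2.2
      else if w.1.1 + 1 = i ∧ w.1.2.2 = a' then w.1.2.1 else f (Sum.inr w)) with hgdef
  set h : CVert H s t d → V := Sum.elim
    (fun u => f (Sum.inl u)) (fun w => g (Sum.inr w)) with hhdef
  have hfu : ∀ u : {i : ℕ // 1 ≤ i ∧ i ≤ d - 1}, f (Sum.inl u) = col H s t d f u.1 :=
    fun u => (col_inl f u).symm
  -- the key analysis for forbidden vertices
  have hw_mem : ∀ w, g (Sum.inr w) ∈ ({w.1.2.1, w.1.2.2} : Set V) := by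
    intro w
    simp only [hgdef, Sum.elim_inr]
    split_ifs with h1 h2
    · exact Or.inr rfl
    · exact Or.inl rfl
    · exact hf.1 (Sum.inr w)
  have hw_f : ∀ (u : {i : ℕ // 1 ≤ i ∧ i ≤ d - 1}) w,
      (u.1 = w.1.1 ∨ u.1 = w.1.1 + 1) → f (Sum.inl u) ≠ g (Sum.inr w) := by
    intro u w hc
    obtain ⟨hk1, hk2, ha, hb, hnadj⟩ := w.2
    have hful : f (Sum.inl u) ∈ layerSet H s t d u.1 := hf.1 (Sum.inl u)
    simp only [hgdef, Sum.elim_inr]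
    split_ifs with h1 h2
    · -- g w = b, with w.1.1 = i and a = a'
      rcases hc with hc | hc
      · exact ne_of_layers hful hb (by omega)
      · rw [hfu u, hc, h1.1]
        intro he
        exact hnadj (by rw [h1.2, ← he]; exact hadj2)
    · -- g w = a, with w.1.1 + 1 = i and b = a'
      rcases hc with hc | hc
      · rw [hfu u, hc, show w.1.1 = i - 1 by omega]
        intro he
        exact hnadj (by rw [← he, h2.2]; exact hadj1)
      · exact ne_of_layers hful ha (by omega)
    · -- g w = f w
      exact hf.2 (adj_inl_inr hc)
  have hw_g : ∀ (u : {i : ℕ // 1 ≤ i ∧ i ≤ d - 1}) w,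
      (u.1 = w.1.1 ∨ u.1 = w.1.1 + 1) → g (Sum.inl u) ≠ g (Sum.inr w) := by
    intro u w hc
    obtain ⟨hk1, hk2, ha, hb, hnadj⟩ := w.2
    by_cases hui : u.1 = i
    · -- g u = a'
      have hgu : g (Sum.inl u) = a' := by simp [hgdef, hui]
      rw [hgu]
      simp only [hgdef, Sum.elim_inr]
      split_ifs with h1 h2
      · -- g w = b ∈ L_{k+1}, k = i so k+1 ≠ i
        exact ne_of_layers ha' hb (by omega)
      · -- g w = a ∈ L_k, k + 1 = i so k ≠ i
        exact ne_of_layers ha' ha (by omega)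
      · -- g w = f w ∈ {a, b}, neither equal to a'
        have hfw : f (Sum.inr w) ∈ ({w.1.2.1, w.1.2.2} : Set V) := hf.1 (Sum.inr w)
        rcases hc with hc | hc
        · -- u.1 = k = i : from ¬h1, a ≠ a'; b in layer i+1
          have hane : w.1.2.1 ≠ a' := fun he => h1 ⟨by omega, he⟩
          have hbne : w.1.2.2 ≠ a' := ne_of_layers hb ha' (by omega)
          rcases hfw with hh | hh
          · rw [hh]; exact fun he => hane (hh ▸ he.symm) |>.elim
          · rw [hh]; exact fun he => hbne (hh ▸ he.symm) |>.elim
        · -- u.1 = k + 1 = i : from ¬h2, b ≠ a'; a in layer i - 1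
          have hbne : w.1.2.2 ≠ a' := fun he => h2 ⟨by omega, he⟩
          have hane : w.1.2.1 ≠ a' := ne_of_layers ha ha' (by omega)
          rcases hfw with hh | hh
          · rw [hh]; exact fun he => hane he.symm |>.elim
          · rw [hh]; exact fun he => hbne he.symm |>.elim
    · -- g u = f u
      have hgu : g (Sum.inl u) = f (Sum.inl u) := by simp [hgdef, hui]
      rw [hgu]
      exact hw_f u w hc
  have hgmem : ∀ v, g v ∈ CList H s t d v := by
    rintro (u | w)
    · by_cases hui : u.1 = i
      · have : g (Sum.inl u) = a' := by simp [hgdef, hui]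
        rw [this]
        show a' ∈ layerSet H s t d u.1
        rw [hui]; exact ha'
      · have : g (Sum.inl u) = f (Sum.inl u) := by simp [hgdef, hui]
        rw [this]; exact hf.1 (Sum.inl u)
    · exact hw_mem w
  have hgproper : IsProperListColoring (CGraph H s t d) (CList H s t d) g :=
    proper_of g hgmem hw_g
  have hhproper : IsProperListColoring (CGraph H s t d) (CList H s t d) h := by
    refine proper_of h ?_ ?_
    · rintro (u | w)
      · exact hf.1 (Sum.inl u)
      · exact hw_mem w
    · intro u w hc
      exact hw_f u w hc
  have hreach_fh : Reconfigurable (CGraph H s t d) (CList H s t d) f h :=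
    recolor_inr hf hhproper (fun u => rfl)
  have hgcol : col H s t d g i = a' := by
    rw [col_eq g hii]
    simp [hgdef]
  have hgcolj : ∀ j, j ≠ i → col H s t d g j = col H s t d f j := by
    intro j hj
    by_cases hjm : 1 ≤ j ∧ j ≤ d - 1
    · rw [col_eq g hjm, col_eq f hjm]
      simp [hgdef, hj]
    · rw [col, col, dif_neg hjm, dif_neg hjm]
  refine ⟨g, hgproper, ?_, hgcol, hgcolj⟩
  by_cases hfi : f (Sum.inl ⟨i, hii⟩) = a'
  · have : g = h := by
      funext x
      rcases x with u | w
      · by_cases hui : u.1 = i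
        · have hu : u = ⟨i, hii⟩ := Subtype.ext hui
          simp [hgdef, hhdef, hui, hu, hfi]
        · simp [hgdef, hhdef, hui]
      · rfl
    rw [this]
    exact hreach_fh
  · refine hreach_fh.tail ⟨hhproper, hgproper, Sum.inl ⟨i, hii⟩, ?_, ?_⟩
    · show f (Sum.inl ⟨i, hii⟩) ≠ g (Sum.inl ⟨i, hii⟩)
      simp only [hgdef, Sum.elim_inl, if_pos rfl]
      exact hfi
    · rintro (u | w) hy
      · by_cases hui : u.1 = i
        · exact congrArg Sum.inl ((Subtype.ext hui : u = ⟨i, hii⟩))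
        · exfalso
          apply hy
          show f (Sum.inl u) = g (Sum.inl u)
          simp [hgdef, hui]
      · exfalso; exact hy rfl

end SPathAux
end Aux5

section Aux6
open SimpleGraph
namespace SPathAux

variable {V : Type*} [DecidableEq V] {H : SimpleGraph V} {s t : V} {d : ℕ}

lemma getVert_mem_support {x y : V} (p : H.Walk x y) {j : ℕ} (hj : j ≤ p.length) :
    p.getVert j ∈ p.support :=
  Walk.mem_support_iff_exists_getVert.2 ⟨j, rfl, hj⟩

/-- If two S-paths differ exactly at position `i`, they are adjacent. -/
lemma adjacent_of_diff (hconn : H.Connected) (hd : H.dist s t = d)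
    {p q : H.Walk s t} (hp : IsSPath H p) (hq : IsSPath H q) {i : ℕ}
    (hne : p.getVert i ≠ q.getVert i) (hi : i ≤ d)
    (heq : ∀ j, j ≤ d → j ≠ i → p.getVert j = q.getVert j) :
    SPathAdjacent p q := by
  have hplen : p.length = d := hp.2.trans hd
  have hqlen : q.length = d := hq.2.trans hd
  have key : ∀ (p' q' : H.Walk s t), IsSPath H p' → IsSPath H q' →
      p'.getVert i ≠ q'.getVert i →
      (∀ j, j ≤ d → j ≠ i → p'.getVert j = q'.getVert j) →
      p'.support.toFinset \ q'.support.toFinset = {p'.getVert i} := by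
    intro p' q' hp' hq' hne' heq'
    have hplen' : p'.length = d := hp'.2.trans hd
    ext x
    simp only [Finset.mem_sdiff, List.mem_toFinset, Finset.mem_singleton]
    constructor
    · rintro ⟨hxp, hxq⟩
      obtain ⟨j, rfl, hjle⟩ := Walk.mem_support_iff_exists_getVert.1 hxp
      rw [hplen'] at hjle
      by_cases hji : j = i
      · rw [hji]
      · exfalso
        apply hxq
        rw [heq' j hjle hji]
        exact getVert_mem_support q' (by rw [hq'.2.trans hd]; exact hjle)
    · rintro rfl
      refine ⟨getVert_mem_support p' (by omega), ?_⟩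
      intro hmem
      have h1 : p'.getVert i ∈ layerSet H s t d i :=
        sPath_getVert_mem_layer hconn hd hp' hi
      have := sPath_support_unique hconn hd hq' hi hmem h1
      exact hne' this
  constructor
  · rw [key p q hp hq hne heq]; simp
  · rw [key q p hq hp (Ne.symm hne) (fun j h1 h2 => (heq j h1 h2).symm)]; simp

/-- Two adjacent S-paths differ at exactly one interior position. -/
lemma diff_of_adjacent (hconn : H.Connected) (hd : H.dist s t = d) (hd2 : 2 ≤ d)
    {p q : H.Walk s t} (hp : IsSPath H p) (hq : IsSPath H q)
    (hadj : SPathAdjacent p q) :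
    ∃ i, 1 ≤ i ∧ i ≤ d - 1 ∧ p.getVert i ≠ q.getVert i ∧
      ∀ j, j ≤ d → j ≠ i → p.getVert j = q.getVert j := by
  have hplen : p.length = d := hp.2.trans hd
  have hqlen : q.length = d := hq.2.trans hd
  obtain ⟨x, hx⟩ := Finset.card_eq_one.1 hadj.1
  have hxp : x ∈ p.support ∧ x ∉ q.support := by
    have : x ∈ p.support.toFinset \ q.support.toFinset := by rw [hx]; simp
    simpa [Finset.mem_sdiff] using this
  obtain ⟨j₀, rfl, hj₀le⟩ := Walk.mem_support_iff_exists_getVert.1 hxp.1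
  rw [hplen] at hj₀le
  have hdiffmem : ∀ y, y ∈ p.support → y ∉ q.support → y = p.getVert j₀ := by
    intro y h1 h2
    have : y ∈ p.support.toFinset \ q.support.toFinset := by
      simp [Finset.mem_sdiff, h1, h2]
    rw [hx] at this
    simpa using this
  refine ⟨j₀, ?_, ?_, ?_, ?_⟩
  · -- j₀ ≠ 0
    rcases Nat.eq_zero_or_pos j₀ with h0 | h0
    · exfalso
      apply hxp.2
      rw [h0, Walk.getVert_zero]
      exact Walk.start_mem_support q
    · exact h0
  · -- j₀ ≤ d - 1
    by_cases hjd : j₀ = d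
    · exfalso
      apply hxp.2
      rw [hjd, show d = p.length from hplen.symm, Walk.getVert_length]
      exact Walk.end_mem_support q
    · omega
  · -- differs at j₀
    intro he
    apply hxp.2
    rw [he]
    exact getVert_mem_support q (by omega)
  · -- all other positions equal
    intro j hj hjne
    by_contra hne
    have hpj : p.getVert j ∈ layerSet H s t d j := sPath_getVert_mem_layer hconn hd hp hj
    have hjq : p.getVert j ∉ q.support := by
      intro hmem
      exact hne (sPath_support_unique hconn hd hq hj hmem hpj)
    have := hdiffmem (p.getVert j) (getVert_mem_support p (by omega)) hjq
    have hpj₀ : p.getVert j₀ ∈ layerSet H s t d j₀ :=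
      sPath_getVert_mem_layer hconn hd hp hj₀le
    exact hjne (layer_eq (this ▸ hpj) hpj₀)

end SPathAux
end Aux6

section Aux7
open SimpleGraph
namespace SPathAux

variable {V : Type*} {H : SimpleGraph V} {s t : V} {d : ℕ}

lemma col_match (hconn : H.Connected) (hd : H.dist s t = d) (hd2 : 2 ≤ d)
    {p : H.Walk s t} (hp : IsSPath H p) {f : CVert H s t d → V}
    (hfP : ∀ u : {i : ℕ // 1 ≤ i ∧ i ≤ d - 1},
      f (Sum.inl u) ∈ p.support ∧ f (Sum.inl u) ∈ layerSet H s t d u.1)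
    {j : ℕ} (hj : j ≤ d) : col H s t d f j = p.getVert j := by
  by_cases hm : 1 ≤ j ∧ j ≤ d - 1
  · rw [col_eq f hm]
    exact sPath_support_unique hconn hd hp hj (hfP ⟨j, hm⟩).1 (hfP ⟨j, hm⟩).2
  · rcases Nat.eq_zero_or_pos j with h0 | h0
    · subst h0; rw [col_zero, Walk.getVert_zero]
    · have : j = d := by omega
      subst this
      rw [col_last hd2, p.getVert_of_length_le (by rw [hp.2.trans hd])]

end SPathAux
end Aux7


/-- Correctness of the reduction: the S-path `P₀` can be transformed into the S-path
`P_r` by a sequence of S-paths in which consecutive ones are adjacent if and only if the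
corresponding proper list colorings `f₀` and `f_r` of the constructed instance `(G, L)`
are reconfigurable. -/
theorem sPath_rerouting_iff_reconfigurable
    {V : Type*} [Fintype V] [DecidableEq V]
    (H : SimpleGraph V) (hconn : H.Connected) (s t : V) (d : ℕ)
    (hd : H.dist s t = d) (hd2 : 2 ≤ d)
    (hlayers : ∀ v : V, ∃ i ≤ d, v ∈ layerSet H s t d i)
    (P₀ Pr : H.Walk s t) (hP₀ : IsSPath H P₀) (hPr : IsSPath H Pr)
    (f₀ fr : CVert H s t d → V)
    (hf₀ : IsProperListColoring (CGraph H s t d) (CList H s t d) f₀)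
    (hfr : IsProperListColoring (CGraph H s t d) (CList H s t d) fr)
    (hf₀P : ∀ u : {i : ℕ // 1 ≤ i ∧ i ≤ d - 1},
      f₀ (Sum.inl u) ∈ P₀.support ∧ f₀ (Sum.inl u) ∈ layerSet H s t d u.1)
    (hfrP : ∀ u : {i : ℕ // 1 ≤ i ∧ i ≤ d - 1},
      fr (Sum.inl u) ∈ Pr.support ∧ fr (Sum.inl u) ∈ layerSet H s t d u.1) :
    Relation.ReflTransGen
        (fun p q : H.Walk s t => IsSPath H p ∧ IsSPath H q ∧ SPathAdjacent p q) P₀ Pr ↔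
      Reconfigurable (CGraph H s t d) (CList H s t d) f₀ fr := by
  open SPathAux in
  constructor
  · intro hchain
    have hinv : ∀ (R : H.Walk s t),
        Relation.ReflTransGen
          (fun p q : H.Walk s t => IsSPath H p ∧ IsSPath H q ∧ SPathAdjacent p q) P₀ R →
        ∃ f, IsProperListColoring (CGraph H s t d) (CList H s t d) f ∧
          Reconfigurable (CGraph H s t d) (CList H s t d) f₀ f ∧
          ∀ j, j ≤ d → col H s t d f j = R.getVert j := by
      intro R hR
      induction hR with
      | refl =>
        exact ⟨f₀, hf₀, Relation.ReflTransGen.refl,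
          fun j hj => col_match hconn hd hd2 hP₀ hf₀P hj⟩
      | @tail p q hsteps hstep ih =>
        obtain ⟨hpS, hqS, hadjpq⟩ := hstep
        obtain ⟨f, hfp, hrec, hcol⟩ := ih
        obtain ⟨i, hi1, hi2, hne, heq⟩ := diff_of_adjacent hconn hd hd2 hpS hqS hadjpq
        have ha' : q.getVert i ∈ layerSet H s t d i :=
          sPath_getVert_mem_layer hconn hd hqS (by omega)
        have hqlen : q.length = d := hqS.2.trans hd
        have hadjA : H.Adj (q.getVert (i - 1)) (q.getVert i) := by
          have := q.adj_getVert_succ (show i - 1 < q.length by omega)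
          rwa [show i - 1 + 1 = i by omega] at this
        have hadjB : H.Adj (q.getVert i) (q.getVert (i + 1)) :=
          q.adj_getVert_succ (by omega)
        have e1 : q.getVert (i - 1) = col H s t d f (i - 1) := by
          rw [← heq (i - 1) (by omega) (by omega), hcol (i - 1) (by omega)]
        have e2 : q.getVert (i + 1) = col H s t d f (i + 1) := by
          rw [← heq (i + 1) (by omega) (by omega), hcol (i + 1) (by omega)]
        rw [e1] at hadjA
        rw [e2] at hadjB
        obtain ⟨g, hgp, hrecfg, hgcoli, hgcolj⟩ :=
          layer_recolor hconn hd hd2 hfp ⟨hi1, hi2⟩ ha' hadjA hadjB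
        refine ⟨g, hgp, hrec.trans hrecfg, ?_⟩
        intro j hj
        by_cases hji : j = i
        · rw [hji, hgcoli]
        · rw [hgcolj j hji, hcol j hj, heq j hj hji]
    obtain ⟨f, hfp, hrec, hcol⟩ := hinv Pr hchain
    refine hrec.trans (recolor_inr hfp hfr ?_)
    intro u
    have hu : u.1 ≤ d := by have := u.2; omega
    rw [← col_inl f u, ← col_inl fr u, hcol u.1 hu,
      col_match hconn hd hd2 hPr hfrP hu]
  · intro hrec
    have hinv : ∀ f, Relation.ReflTransGen
        (RecolorStep (CGraph H s t d) (CList H s t d)) f₀ f →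
        ∃ p : H.Walk s t, IsSPath H p ∧
          Relation.ReflTransGen
            (fun p q : H.Walk s t => IsSPath H p ∧ IsSPath H q ∧ SPathAdjacent p q) P₀ p ∧
          ∀ j, j ≤ d → p.getVert j = col H s t d f j := by
      intro f hf
      induction hf with
      | refl =>
        exact ⟨P₀, hP₀, Relation.ReflTransGen.refl,
          fun j hj => (col_match hconn hd hd2 hP₀ hf₀P hj).symm⟩
      | @tail f g hsteps hstep ih =>
        obtain ⟨p, hpS, hchain, hcol⟩ := ih
        obtain ⟨hfp, hgp, w, hw, huniq⟩ := hstep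
        match w, hw, huniq with
        | Sum.inr w, hw, huniq =>
          refine ⟨p, hpS, hchain, ?_⟩
          intro j hj
          rw [hcol j hj]
          by_cases hm : 1 ≤ j ∧ j ≤ d - 1
          · rw [col_eq f hm, col_eq g hm]
            by_contra hne
            exact absurd (huniq (Sum.inl ⟨j, hm⟩) hne) (by simp)
          · rw [col, col, dif_neg hm, dif_neg hm]
        | Sum.inl u, hw, huniq =>
          set q := pathOf H s t d hconn hd hd2 hgp with hqdef
          have hqS : IsSPath H q := pathOf_isSPath hconn hd hd2 hgp
          have hcoleq : ∀ j, j ≤ d → j ≠ u.1 → col H s t d f j = col H s t d g j := by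
            intro j hj hju
            by_cases hm : 1 ≤ j ∧ j ≤ d - 1
            · rw [col_eq f hm, col_eq g hm]
              by_contra hne
              have := huniq (Sum.inl ⟨j, hm⟩) hne
              rw [Sum.inl.injEq] at this
              exact hju (by rw [← this])
            · rw [col, col, dif_neg hm, dif_neg hm]
          have hu1 : u.1 ≤ d := by have := u.2; omega
          have hne : p.getVert u.1 ≠ q.getVert u.1 := by
            rw [hcol u.1 hu1, pathOf_getVert hconn hd hd2 hgp hu1,
              col_inl f u, col_inl g u]
            exact hw
          have heq : ∀ j, j ≤ d → j ≠ u.1 → p.getVert j = q.getVert j := by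
            intro j hj hju
            rw [hcol j hj, pathOf_getVert hconn hd hd2 hgp hj, hcoleq j hj hju]
          have hstep' : IsSPath H p ∧ IsSPath H q ∧ SPathAdjacent p q :=
            ⟨hpS, hqS, adjacent_of_diff hconn hd hpS hqS hne hu1 heq⟩
          exact ⟨q, hqS, hchain.tail hstep',
            fun j hj => pathOf_getVert hconn hd hd2 hgp hj⟩
    obtain ⟨p, hpS, hchain, hcol⟩ := hinv fr hrec
    have hpeq : p = Pr := by
      apply walk_ext
      · rw [hpS.2, hPr.2]
      · intro j
        by_cases hj : j ≤ d
        · rw [hcol j hj, col_match hconn hd hd2 hPr hfrP hj]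
        · rw [p.getVert_of_length_le (by rw [hpS.2.trans hd]; omega),
            Pr.getVert_of_length_le (by rw [hPr.2.trans hd]; omega)]
    rwa [hpeq] at hchain
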